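/- Let τ, Λ, α, R be real numbers, set β² = 2Λ − (2/3)τ², and let φ > 0, p ∈ ℝ, E ∈ ℝ satisfy the energy relation (1/2)p² − (R/16)φ² + (β²/48)φ⁶ − (α²/48)φ⁻⁶ = E. Then, setting m = −4E − τα/(3√6), the following identity holds: 16p²/φ⁶ − 4·(τ/3 − α/(√6·φ⁶))² = (4/φ⁴)·(R/2 − 2m/φ² − Λφ⁴/3). -/

import Mathlib

/-- the Hawking-mass identity: with `β² = 2Λ − (2/3)τ²` and the
energy relation `½p² − (R/16)φ² + (β²/48)φ⁶ − (α²/48)φ⁻⁶ = E`, setting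
`m = −4E − τα/(3√6)` one has
`16p²/φ⁶ − 4(τ/3 − α/(√6 φ⁶))² = (4/φ⁴)(R/2 − 2m/φ² − Λφ⁴/3)`. -/
theorem stmt_19 (τ Λ α R β φ p E : ℝ)
    (hβ : β ^ 2 = 2 * Λ - (2 / 3) * τ ^ 2) (hφ : 0 < φ)
    (hE : (1 / 2) * p ^ 2 - (R / 16) * φ ^ 2 + (β ^ 2 / 48) * φ ^ 6
      - (α ^ 2 / 48) / φ ^ 6 = E)
    (m : ℝ) (hm : m = -4 * E - τ * α / (3 * Real.sqrt 6)) :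
    16 * p ^ 2 / φ ^ 6 - 4 * (τ / 3 - α / (Real.sqrt 6 * φ ^ 6)) ^ 2
      = (4 / φ ^ 4) * (R / 2 - 2 * m / φ ^ 2 - Λ * φ ^ 4 / 3) := by
  have hs : Real.sqrt 6 ^ 2 = 6 := Real.sq_sqrt (by norm_num)
  have hs0 : Real.sqrt 6 ≠ 0 := by positivity
  have hφ0 : φ ≠ 0 := ne_of_gt hφ
  subst hm
  rw [← hE, hβ]
  field_simp
  ring_nf
  have key : Real.sqrt 6 * φ ^ 18 * α ^ 2 * 143327232
      = Real.sqrt 6 ^ 3 * φ ^ 18 * α ^ 2 * 23887872 := by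
    have hs3 : Real.sqrt 6 ^ 3 = 6 * Real.sqrt 6 := by
      rw [pow_succ, hs]
    rw [hs3]; ring
  linarith [key, show Real.sqrt 6 ^ 2 * α ^ 2 = 6 * α ^ 2 by rw [hs]]
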